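/- Let H be a real Hilbert space, f ∈ H, and (g_n)_{n∈ℕ} a sequence in H such that Λ_n := {g_1,…,g_n} is linearly independent for each n. Then the limit lim_{n→∞} ‖I_{Λ_n}(f)‖² exists and equals ‖I_{Λ_1}(f)‖² + Σ_{n=1}^∞ |⟪f − I_{Λ_n}(f), g_{n+1}⟫|² / P_{Λ_n}(g_{n+1})², this value is at most ‖f‖², and consequently |⟪f − I_{Λ_n}(f), g_{n+1}⟫| / P_{Λ_n}(g_{n+1}) → 0 as n → ∞. -/

import Mathlib

open Filter
open scoped RealInnerProductSpace ENNReal Topology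

/-- Generalized interpolation operator: orthogonal projection onto the span of `Λ`. -/
noncomputable def interp {H : Type*} [NormedAddCommGroup H] [InnerProductSpace ℝ H]
    (Λ : Finset H) (f : H) : H :=
  haveI : FiniteDimensional ℝ (Submodule.span ℝ (Λ : Set H)) :=
    FiniteDimensional.span_of_finite ℝ Λ.finite_toSet
  (Submodule.orthogonalProjectionOnto (Submodule.span ℝ (Λ : Set H)) f : H)

/-- Generalized power function: distance from `g` to the span of `Λ`. -/
noncomputable def powerFn {H : Type*} [NormedAddCommGroup H] [InnerProductSpace ℝ H]
    (Λ : Finset H) (g : H) : ℝ := ‖g - interp Λ g‖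



section aux
variable {H : Type*} [NormedAddCommGroup H] [InnerProductSpace ℝ H] [CompleteSpace H] [DecidableEq H]
set_option linter.unusedSectionVars false

lemma interp_mem (Λ : Finset H) (f : H) : interp Λ f ∈ Submodule.span ℝ (Λ : Set H) := by
  haveI : FiniteDimensional ℝ (Submodule.span ℝ (Λ : Set H)) :=
    FiniteDimensional.span_of_finite ℝ Λ.finite_toSet
  exact (Submodule.orthogonalProjectionOnto (Submodule.span ℝ (Λ : Set H)) f).2

lemma interp_inner_eq_zero (Λ : Finset H) (f : H) :
    ∀ w ∈ Submodule.span ℝ (Λ : Set H), ⟪f - interp Λ f, w⟫ = 0 := by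
  haveI : FiniteDimensional ℝ (Submodule.span ℝ (Λ : Set H)) :=
    FiniteDimensional.span_of_finite ℝ Λ.finite_toSet
  exact fun w hw => Submodule.starProjection_inner_eq_zero f w hw

lemma norm_interp_sq_le (Λ : Finset H) (f : H) : ‖interp Λ f‖ ^ 2 ≤ ‖f‖ ^ 2 := by
  have hsplit : f = interp Λ f + (f - interp Λ f) := by abel
  have hperp : ⟪interp Λ f, f - interp Λ f⟫ = 0 := by
    rw [real_inner_comm]
    exact interp_inner_eq_zero Λ f _ (interp_mem Λ f)
  calc ‖interp Λ f‖ ^ 2 ≤ ‖interp Λ f‖ ^ 2 + ‖f - interp Λ f‖ ^ 2 :=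
        le_add_of_nonneg_right (by positivity)
    _ = ‖f‖ ^ 2 := by
        conv_rhs => rw [hsplit]
        rw [@norm_add_sq_real, hperp]; ring

lemma interp_insert_sq (f x : H) (Λ : Finset H) :
    ‖interp (insert x Λ) f‖ ^ 2
      = ‖interp Λ f‖ ^ 2 + (|⟪f - interp Λ f, x⟫| / powerFn Λ x) ^ 2 := by
  haveI : FiniteDimensional ℝ (Submodule.span ℝ ((insert x Λ : Finset H) : Set H)) :=
    FiniteDimensional.span_of_finite ℝ (insert x Λ).finite_toSet
  have hcoe : ((insert x Λ : Finset H) : Set H) = insert x (Λ : Set H) := Finset.coe_insert x Λ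
  by_cases hx : x ∈ Submodule.span ℝ (Λ : Set H)
  · have hsp : Submodule.span ℝ ((insert x Λ : Finset H) : Set H) = Submodule.span ℝ (Λ : Set H) := by
      rw [hcoe]; exact Submodule.span_insert_eq_span hx
    have h1 : interp (insert x Λ) f = interp Λ f := by
      refine Submodule.eq_starProjection_of_mem_of_inner_eq_zero ?_ ?_
      · rw [hsp]; exact interp_mem Λ f
      · intro w hw; rw [hsp] at hw; exact interp_inner_eq_zero Λ f w hw
    have h2 : ⟪f - interp Λ f, x⟫ = 0 := interp_inner_eq_zero Λ f x hx
    rw [h1, h2]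
    simp
  · set y := x - interp Λ x with hy
    have hyV : ∀ z ∈ Submodule.span ℝ (Λ : Set H), ⟪y, z⟫ = 0 := interp_inner_eq_zero Λ x
    have hy0 : y ≠ 0 := by
      intro h
      apply hx
      have : x = interp Λ x := by rwa [sub_eq_zero] at h
      rw [this]; exact interp_mem Λ x
    have hc : (0:ℝ) < ‖y‖ := norm_pos_iff.mpr hy0
    set t : ℝ := ⟪f, y⟫ / ‖y‖ ^ 2 with ht
    have hVle : Submodule.span ℝ (Λ : Set H) ≤
        Submodule.span ℝ ((insert x Λ : Finset H) : Set H) := by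
      rw [hcoe]; exact Submodule.span_mono (Set.subset_insert x _)
    have hxmem : x ∈ Submodule.span ℝ ((insert x Λ : Finset H) : Set H) := by
      rw [hcoe]; exact Submodule.subset_span (Set.mem_insert x _)
    have hymem : y ∈ Submodule.span ℝ ((insert x Λ : Finset H) : Set H) :=
      Submodule.sub_mem _ hxmem (hVle (interp_mem Λ x))
    have hfy : ⟪f - interp Λ f, y⟫ = ⟪f, y⟫ := by
      have h1 : ⟪interp Λ f, y⟫ = 0 := by
        rw [real_inner_comm]; exact hyV _ (interp_mem Λ f)
      rw [inner_sub_left, h1, sub_zero]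
    have hfvV : ∀ z ∈ Submodule.span ℝ (Λ : Set H),
        ⟪f - (interp Λ f + t • y), z⟫ = 0 := by
      intro z hz
      have : f - (interp Λ f + t • y) = (f - interp Λ f) - t • y := by abel
      rw [this, inner_sub_left, real_inner_smul_left, interp_inner_eq_zero Λ f z hz, hyV z hz]
      ring
    have hfvy : ⟪f - (interp Λ f + t • y), y⟫ = 0 := by
      have : f - (interp Λ f + t • y) = (f - interp Λ f) - t • y := by abel
      rw [this, inner_sub_left, real_inner_smul_left, hfy, real_inner_self_eq_norm_sq, ht]
      field_simp
      ring
    have hfvx : ⟪f - (interp Λ f + t • y), x⟫ = 0 := by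
      have hxsplit : x = y + interp Λ x := by rw [hy]; abel
      rw [hxsplit, inner_add_right, hfvy, hfvV _ (interp_mem Λ x), add_zero]
    have h1 : interp (insert x Λ) f = interp Λ f + t • y := by
      refine Submodule.eq_starProjection_of_mem_of_inner_eq_zero
        (Submodule.add_mem _ (hVle (interp_mem Λ f)) (Submodule.smul_mem _ t hymem)) ?_
      intro w hw
      rw [hcoe] at hw
      rcases Submodule.mem_span_insert.mp hw with ⟨a, z, hz, rfl⟩
      rw [inner_add_right, real_inner_smul_right, hfvx, hfvV _ hz]
      ring
    have hP : powerFn Λ x = ‖y‖ := rfl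
    have hnum : ⟪f - interp Λ f, x⟫ = ⟪f, y⟫ := by
      have hxsplit : x = y + interp Λ x := by rw [hy]; abel
      rw [hxsplit, inner_add_right, hfy, interp_inner_eq_zero Λ f _ (interp_mem Λ x), add_zero]
    have hperp : ⟪interp Λ f, t • y⟫ = 0 := by
      rw [real_inner_smul_right, real_inner_comm, hyV _ (interp_mem Λ f), mul_zero]
    have key : (|⟪f, y⟫| / ‖y‖) ^ 2 = t ^ 2 * ‖y‖ ^ 2 := by
      rw [div_pow, sq_abs, ht, div_pow]
      field_simp
    rw [h1, hP, hnum, @norm_add_sq_real, hperp, norm_smul, Real.norm_eq_abs, key]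
    rw [mul_zero, add_zero, mul_pow, sq_abs]

end aux

/-- The residual ratio `|⟪f - I_{Λ n}(f), g_{n+1}⟫| / P_{Λ n}(g_{n+1})` appearing in the
`f/P`-greedy analysis (`0`-indexed: `Λ n = {g_0, …, g_{n-1}}` and the next element is `g n`). -/
noncomputable def greedyRatio {H : Type*} [NormedAddCommGroup H] [InnerProductSpace ℝ H]
    [DecidableEq H] (f : H) (g : ℕ → H) (n : ℕ) : ℝ :=
  |⟪f - interp ((Finset.range n).image g) f, g n⟫| / powerFn ((Finset.range n).image g) (g n)

/-- the limit `lim_n ‖I_{Λ n}(f)‖²` exists and equals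
`‖I_{Λ 1}(f)‖² + ∑_{k=1}^∞ (|⟪f - I_{Λ k}(f), g_{k+1}⟫| / P_{Λ k}(g_{k+1}))²`, this value is
at most `‖f‖²`, and consequently the residual ratios tend to `0`. -/
theorem stmt_15 {H : Type*} [NormedAddCommGroup H] [InnerProductSpace ℝ H] [CompleteSpace H]
    [DecidableEq H] (f : H) (g : ℕ → H)
    (hli : ∀ n, LinearIndependent (ι := (((Finset.range n).image g : Finset H) : Set H))
      ℝ Subtype.val) :
    Summable (fun k : ℕ => greedyRatio f g (k + 1) ^ 2) ∧
      Tendsto (fun n => ‖interp ((Finset.range n).image g) f‖ ^ 2) atTop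
        (𝓝 (‖interp ((Finset.range 1).image g) f‖ ^ 2 +
          ∑' k : ℕ, greedyRatio f g (k + 1) ^ 2)) ∧
      ‖interp ((Finset.range 1).image g) f‖ ^ 2 +
          ∑' k : ℕ, greedyRatio f g (k + 1) ^ 2 ≤ ‖f‖ ^ 2 ∧
      Tendsto (fun n => greedyRatio f g n) atTop (𝓝 0) := by
  set a : ℕ → ℝ := fun n => ‖interp ((Finset.range n).image g) f‖ ^ 2 with ha
  set r : ℕ → ℝ := fun n => greedyRatio f g n with hr
  have hstep : ∀ n, a (n + 1) = a n + r n ^ 2 := by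
    intro n
    have himg : (Finset.range (n + 1)).image g = insert (g n) ((Finset.range n).image g) := by
      rw [Finset.range_add_one, Finset.image_insert]
    simp only [ha, hr, greedyRatio, himg]
    exact interp_insert_sq f (g n) _
  have hrnn : ∀ n, 0 ≤ r n := fun n =>
    div_nonneg (abs_nonneg _) (norm_nonneg _)
  have hbound : ∀ n, a n ≤ ‖f‖ ^ 2 := fun n => norm_interp_sq_le _ f
  have hpartial : ∀ m, ∑ k ∈ Finset.range m, r (k + 1) ^ 2 = a (m + 1) - a 1 := by
    intro m
    induction m with
    | zero => simp
    | succ m ih => rw [Finset.sum_range_succ, ih, hstep (m + 1)]; ring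
  have hsummable : Summable (fun k : ℕ => r (k + 1) ^ 2) := by
    apply summable_of_sum_range_le (c := ‖f‖ ^ 2 - a 1) (fun k => sq_nonneg _)
    intro m
    rw [hpartial m]
    have := hbound (m + 1)
    linarith
  have hsum : Tendsto (fun m => ∑ k ∈ Finset.range m, r (k + 1) ^ 2) atTop
      (𝓝 (∑' k : ℕ, r (k + 1) ^ 2)) := hsummable.hasSum.tendsto_sum_nat
  have htendsto' : Tendsto (fun m => a (m + 1)) atTop (𝓝 (a 1 + ∑' k : ℕ, r (k + 1) ^ 2)) := by
    have : (fun m => a (m + 1)) = fun m => a 1 + ∑ k ∈ Finset.range m, r (k + 1) ^ 2 := by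
      funext m; rw [hpartial m]; ring
    rw [this]
    exact tendsto_const_nhds.add hsum
  have htendsto : Tendsto a atTop (𝓝 (a 1 + ∑' k : ℕ, r (k + 1) ^ 2)) :=
    (tendsto_add_atTop_iff_nat 1).mp htendsto'
  have hle : a 1 + ∑' k : ℕ, r (k + 1) ^ 2 ≤ ‖f‖ ^ 2 :=
    le_of_tendsto htendsto (Eventually.of_forall hbound)
  have hr2 : Tendsto (fun n => r n ^ 2) atTop (𝓝 0) := by
    have h1 : Tendsto (fun k => r (k + 1) ^ 2) atTop (𝓝 0) := hsummable.tendsto_atTop_zero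
    exact (tendsto_add_atTop_iff_nat 1).mp h1
  have hr0 : Tendsto r atTop (𝓝 0) := by
    have h1 : Tendsto (fun n => Real.sqrt (r n ^ 2)) atTop (𝓝 (Real.sqrt 0)) :=
      (Real.continuous_sqrt.tendsto 0).comp hr2
    have h2 : (fun n => Real.sqrt (r n ^ 2)) = r := by
      funext n; rw [Real.sqrt_sq (hrnn n)]
    rwa [h2, Real.sqrt_zero] at h1
  exact ⟨hsummable, htendsto, hle, hr0⟩
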